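/- Let f : ℝ^d → ℝ be differentiable with L-Lipschitz gradient (L > 0). Let x, u, d ∈ ℝ^d satisfy ⟨u, d⟩ ≥ ‖d‖², and let 0 ≤ η ≤ 1/(2L). Then f(x − η·d) ≤ f(x) + (η/2)·‖∇f(x) − u‖² − (η/4)·‖d‖². -/

import Mathlib

open scoped RealInnerProductSpace BigOperators

lemma my_hasDerivAt_line {d : ℕ} (f : EuclideanSpace ℝ (Fin d) → ℝ)
    (hdiff : Differentiable ℝ f) (x v : EuclideanSpace ℝ (Fin d)) (t : ℝ) :
    HasDerivAt (fun s : ℝ => f (x + s • v)) ⟪gradient f (x + t • v), v⟫ t := by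
  have h1 : HasDerivAt (fun s : ℝ => x + s • v) v t := by
    simpa using ((hasDerivAt_id t).smul_const v).const_add x
  have h2 := (hdiff (x + t • v)).hasGradientAt
  rw [hasGradientAt_iff_hasFDerivAt] at h2
  have := h2.comp_hasDerivAt t h1
  simpa [Function.comp_def] using this

lemma my_smooth_upper {d : ℕ} (f : EuclideanSpace ℝ (Fin d) → ℝ) (L : ℝ)
    (hL : 0 ≤ L) (hdiff : Differentiable ℝ f)
    (hlip : ∀ x y : EuclideanSpace ℝ (Fin d), ‖gradient f x - gradient f y‖ ≤ L * ‖x - y‖)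
    (x v : EuclideanSpace ℝ (Fin d)) :
    f (x + v) ≤ f x + ⟪gradient f x, v⟫ + L / 2 * ‖v‖ ^ 2 := by
  have hgradcont : Continuous (gradient f) := by
    have : LipschitzWith ⟨L, hL⟩ (gradient f) :=
      LipschitzWith.of_dist_le_mul fun y z => by
        rw [dist_eq_norm, dist_eq_norm]; exact hlip y z
    exact this.continuous
  have hctsderiv : Continuous fun t : ℝ => ⟪gradient f (x + t • v), v⟫ := by
    apply Continuous.inner _ continuous_const
    exact hgradcont.comp (continuous_const.add (continuous_id.smul continuous_const))
  have hint : ∫ t in (0:ℝ)..1, ⟪gradient f (x + t • v), v⟫ =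
      f (x + v) - f x := by
    have := intervalIntegral.integral_eq_sub_of_hasDerivAt
      (f := fun s : ℝ => f (x + s • v))
      (f' := fun t : ℝ => ⟪gradient f (x + t • v), v⟫)
      (a := 0) (b := 1)
      (fun t _ => my_hasDerivAt_line f hdiff x v t)
      (hctsderiv.intervalIntegrable 0 1)
    simpa using this
  have hbound : ∫ t in (0:ℝ)..1, ⟪gradient f (x + t • v), v⟫ ≤
      ⟪gradient f x, v⟫ + L / 2 * ‖v‖ ^ 2 := by
    have key : ∀ t ∈ Set.Icc (0:ℝ) 1,
        ⟪gradient f (x + t • v), v⟫ ≤ ⟪gradient f x, v⟫ + L * t * ‖v‖ ^ 2 := by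
      intro t ht
      have h1 : ⟪gradient f (x + t • v) - gradient f x, v⟫ ≤
          ‖gradient f (x + t • v) - gradient f x‖ * ‖v‖ :=
        real_inner_le_norm _ _
      have h2 : ‖gradient f (x + t • v) - gradient f x‖ ≤ L * (t * ‖v‖) := by
        have := hlip (x + t • v) x
        simpa [norm_smul, abs_of_nonneg ht.1] using this
      have h3 : ⟪gradient f (x + t • v) - gradient f x, v⟫ ≤ L * t * ‖v‖ ^ 2 := by
        calc ⟪gradient f (x + t • v) - gradient f x, v⟫ ≤ _ := h1
          _ ≤ L * (t * ‖v‖) * ‖v‖ :=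
            mul_le_mul_of_nonneg_right h2 (norm_nonneg _)
          _ = L * t * ‖v‖ ^ 2 := by ring
      have := inner_sub_left (𝕜 := ℝ) (gradient f (x + t • v)) (gradient f x) v
      linarith [h3, this.symm.le, this.le]
    have hmono : ∫ t in (0:ℝ)..1, ⟪gradient f (x + t • v), v⟫ ≤
        ∫ t in (0:ℝ)..1, (⟪gradient f x, v⟫ + L * t * ‖v‖ ^ 2) := by
      apply intervalIntegral.integral_mono_on (by norm_num)
        (hctsderiv.intervalIntegrable 0 1)
        (by apply Continuous.intervalIntegrable; fun_prop)
      exact key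
    have hval : ∫ t in (0:ℝ)..1, (⟪gradient f x, v⟫ + L * t * ‖v‖ ^ 2) =
        ⟪gradient f x, v⟫ + L / 2 * ‖v‖ ^ 2 := by
      rw [intervalIntegral.integral_add (by apply Continuous.intervalIntegrable; fun_prop)
        (by apply Continuous.intervalIntegrable; fun_prop)]
      simp only [intervalIntegral.integral_const, smul_eq_mul]
      have : ∫ t in (0:ℝ)..1, L * t * ‖v‖ ^ 2 = L / 2 * ‖v‖ ^ 2 := by
        have : (fun t : ℝ => L * t * ‖v‖ ^ 2) = fun t : ℝ => (L * ‖v‖ ^ 2) * t := by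
          funext t; ring
        rw [this, intervalIntegral.integral_const_mul, integral_id]
        ring
      rw [this]; ring
    linarith [hmono, hval.le]
  linarith [hint.symm.le, hint.le, hbound]

/-- The paper's Lemma 3 (lem:update2): one-step descent inequality for a multi-gradient step. -/
theorem stimulus_descent_lemma {d : ℕ} (f : EuclideanSpace ℝ (Fin d) → ℝ) (L : ℝ)
    (hL : 0 < L) (hdiff : Differentiable ℝ f)
    (hlip : ∀ x y : EuclideanSpace ℝ (Fin d), ‖gradient f x - gradient f y‖ ≤ L * ‖x - y‖)
    (x u dvec : EuclideanSpace ℝ (Fin d))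
    (hud : ⟪u, dvec⟫ ≥ ‖dvec‖ ^ 2)
    (η : ℝ) (hη0 : 0 ≤ η) (hη : η ≤ 1 / (2 * L)) :
    f (x - η • dvec) ≤
      f x + (η / 2) * ‖gradient f x - u‖ ^ 2 - (η / 4) * ‖dvec‖ ^ 2 := by
  have hmain := my_smooth_upper f L hL.le hdiff hlip x (-(η • dvec))
  have heq : x + -(η • dvec) = x - η • dvec := by abel
  rw [heq] at hmain
  have hinner : ⟪gradient f x, -(η • dvec)⟫ = -η * ⟪gradient f x, dvec⟫ := by
    rw [inner_neg_right, real_inner_smul_right]; ring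
  have hnorm : ‖-(η • dvec)‖ ^ 2 = η ^ 2 * ‖dvec‖ ^ 2 := by
    rw [norm_neg, norm_smul, Real.norm_eq_abs, abs_of_nonneg hη0]; ring
  rw [hinner, hnorm] at hmain
  -- ⟪g, dvec⟫ = ⟪g - u, dvec⟫ + ⟪u, dvec⟫
  have hsplit : ⟪gradient f x, dvec⟫ =
      ⟪gradient f x - u, dvec⟫ + ⟪u, dvec⟫ := by
    rw [inner_sub_left]; ring
  have hcs : ⟪gradient f x - u, dvec⟫ ≥ -(‖gradient f x - u‖ * ‖dvec‖) := by
    have := real_inner_le_norm (gradient f x - u) (-dvec)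
    rw [inner_neg_right, norm_neg] at this
    linarith
  have hamgm : ‖gradient f x - u‖ * ‖dvec‖ ≤
      (1/2) * ‖gradient f x - u‖ ^ 2 + (1/2) * ‖dvec‖ ^ 2 := by
    nlinarith [sq_nonneg (‖gradient f x - u‖ - ‖dvec‖)]
  -- L * η^2 / 2 ≤ η / 4
  have hLη : L / 2 * (η ^ 2 * ‖dvec‖ ^ 2) ≤ η / 4 * ‖dvec‖ ^ 2 := by
    have h1 : L * η ≤ 1 / 2 := by
      rw [le_div_iff₀ (by positivity)] at hη
      nlinarith
    nlinarith [sq_nonneg ‖dvec‖, mul_nonneg hη0 (sq_nonneg ‖dvec‖)]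
  nlinarith [mul_le_mul_of_nonneg_left hamgm hη0,
    mul_le_mul_of_nonneg_left (neg_le_neg hud) hη0,
    mul_le_mul_of_nonneg_left hcs hη0, sq_nonneg ‖dvec‖]
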